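/- arXiv:2603.26297 — 2 statements merged into one kernel-verified Lean document; each statement's English description precedes it below -/
import Mathlib

section
/- Let x ∈ ℝⁿ be a nonzero vector with non-negative entries, and let α(x) = (min of the nonzero entries of x)/(max of the nonzero entries of x). Then (2α(x)^{1/2}/(1+α(x))) · ‖x‖₀^{1/2} ≤ ‖x‖₁/‖x‖₂. -/
/-- Lemma 3.3 of Yin–Esser–Xin 2014. For a nonzero vector `x ∈ ℝⁿ`
with non-negative entries, letting `α(x)` be the ratio of the smallest nonzero entry to
the largest entry, `(2√α/(1+α))·‖x‖₀^{1/2} ≤ ‖x‖₁/‖x‖₂`. -/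
theorem stmt3 {n : ℕ} (x : Fin n → ℝ) (hx : x ≠ 0) (hnn : ∀ i, 0 ≤ x i)
    (α : ℝ)
    (hα : α = sInf {r : ℝ | ∃ i, x i ≠ 0 ∧ x i = r} / sSup {r : ℝ | ∃ i, x i ≠ 0 ∧ x i = r}) :
    (2 * Real.sqrt α / (1 + α)) * Real.sqrt (({i | x i ≠ 0} : Set (Fin n)).ncard) ≤
      (∑ i, |x i|) / Real.sqrt (∑ i, (x i) ^ 2) := by
  classical
  set s : Finset (Fin n) := Finset.univ.filter (fun i => x i ≠ 0) with hs
  have hsne : s.Nonempty := by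
    obtain ⟨i, hi⟩ := Function.ne_iff.mp hx
    refine ⟨i, ?_⟩
    simp only [hs, Finset.mem_filter, Finset.mem_univ, true_and]
    simpa using hi
  have himg : (s.image x).Nonempty := hsne.image x
  have hset : {r : ℝ | ∃ i, x i ≠ 0 ∧ x i = r} = ↑(s.image x) := by
    ext r; simp [hs, eq_comm]
  set m : ℝ := (s.image x).min' himg with hm
  set M : ℝ := (s.image x).max' himg with hM
  have hInf : sInf {r : ℝ | ∃ i, x i ≠ 0 ∧ x i = r} = m := by
    rw [hset]; exact himg.csInf_eq_min'
  have hSup : sSup {r : ℝ | ∃ i, x i ≠ 0 ∧ x i = r} = M := by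
    rw [hset]; exact himg.csSup_eq_max'
  rw [hInf, hSup] at hα
  -- basic facts about m, M
  obtain ⟨im, him, himx⟩ := Finset.mem_image.mp ((s.image x).min'_mem himg)
  have hmpos : 0 < m := by
    rw [hm, ← himx]
    have := (Finset.mem_filter.mp him).2
    exact lt_of_le_of_ne (hnn im) (Ne.symm this)
  have hle : ∀ i ∈ s, m ≤ x i ∧ x i ≤ M := fun i hi =>
    ⟨Finset.min'_le _ _ (Finset.mem_image_of_mem x hi),
     Finset.le_max' _ _ (Finset.mem_image_of_mem x hi)⟩
  have hmM : m ≤ M := le_trans (hle im him).1 (hle im him).2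
  have hMpos : 0 < M := lt_of_lt_of_le hmpos hmM
  -- sums
  set k : ℝ := (s.card : ℝ) with hk
  have hkpos : 0 < k := by
    simp only [hk]
    exact_mod_cast hsne.card_pos
  have hA : (∑ i, |x i|) = ∑ i ∈ s, x i := by
    rw [Finset.sum_filter]
    apply Finset.sum_congr rfl
    intro i _
    by_cases h : x i = 0 <;> simp [h, abs_of_nonneg (hnn i)]
  have hB2 : (∑ i, (x i) ^ 2) = ∑ i ∈ s, (x i) ^ 2 := by
    rw [Finset.sum_filter]
    apply Finset.sum_congr rfl
    intro i _
    by_cases h : x i = 0 <;> simp [h]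
  set A : ℝ := ∑ i ∈ s, x i with hAdef
  set B2 : ℝ := ∑ i ∈ s, (x i) ^ 2 with hB2def
  have hApos : 0 < A :=
    Finset.sum_pos (fun i hi => lt_of_lt_of_le hmpos (hle i hi).1) hsne
  have hB2pos : 0 < B2 :=
    Finset.sum_pos (fun i hi => pow_pos (lt_of_lt_of_le hmpos (hle i hi).1) 2) hsne
  -- key inequality
  have hkey : B2 + k * (m * M) ≤ (m + M) * A := by
    have : ∑ i ∈ s, ((x i) ^ 2 + m * M) ≤ ∑ i ∈ s, (m + M) * x i := by
      apply Finset.sum_le_sum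
      intro i hi
      obtain ⟨h1, h2⟩ := hle i hi
      nlinarith
    rw [Finset.sum_add_distrib, Finset.sum_const, ← Finset.mul_sum] at this
    simpa [hk, nsmul_eq_mul, mul_assoc] using this
  set B : ℝ := Real.sqrt B2 with hBdef
  have hBpos : 0 < B := Real.sqrt_pos.mpr hB2pos
  have hBsq : B ^ 2 = B2 := Real.sq_sqrt hB2pos.le
  have hkmM : 0 ≤ k * (m * M) := by positivity
  have hsq : Real.sqrt (k * (m * M)) ^ 2 = k * (m * M) := Real.sq_sqrt hkmM
  have hamgm : 2 * Real.sqrt (k * (m * M)) * B ≤ (m + M) * A := by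
    nlinarith [sq_nonneg (B - Real.sqrt (k * (m * M)))]
  -- rewrite goal
  have hncard : (({i | x i ≠ 0} : Set (Fin n)).ncard : ℝ) = k := by
    have : ({i | x i ≠ 0} : Set (Fin n)) = ↑s := by ext i; simp [hs]
    rw [this, Set.ncard_coe_finset]
  rw [hA, hB2, hncard]
  -- show LHS equals 2 * sqrt(k*m*M)/(m+M)
  have hLHS : 2 * Real.sqrt α / (1 + α) * Real.sqrt k
      = 2 * Real.sqrt (k * (m * M)) / (m + M) := by
    have hαval : α = m / M := hα
    have hsqrtα : Real.sqrt α = Real.sqrt m / Real.sqrt M := by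
      rw [hαval, Real.sqrt_div hmpos.le]
    have hsM : Real.sqrt M ^ 2 = M := Real.sq_sqrt hMpos.le
    have hsm : Real.sqrt m ^ 2 = m := Real.sq_sqrt hmpos.le
    have hsMne : Real.sqrt M ≠ 0 := by positivity
    rw [hsqrtα, Real.sqrt_mul hkpos.le, Real.sqrt_mul hmpos.le, hαval]
    have hMm : (0:ℝ) < m + M := by linarith
    field_simp
    ring_nf
    rw [hsM]
    ring
  rw [hLHS]
  rw [div_le_div_iff₀ (by positivity) hBpos]
  linarith [hamgm]
end

section
/- Let B be a nonzero symmetric positive semi-definite n×n real matrix. Then tr(B)/‖B‖₂ ≥ α(B)^{1/2} · rank(B)^{1/2} · (2/(1+α(B))), where ‖B‖₂ is the Frobenius norm and α(B) is the ratio of the smallest nonzero eigenvalue to the largest eigenvalue of B. In particular tr(B)/‖B‖₂ ≥ α(B)^{1/2} rank(B)^{1/2} (up to the factor 2/(1+α(B)) ≥ 1 when α(B) ≤ 1). -/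
/-- For a nonzero symmetric PSD matrix `B`,
`tr(B)/‖B‖₂ ≥ α(B)^{1/2}·rank(B)^{1/2}·(2/(1+α(B)))`, where `‖B‖₂` is the Frobenius norm
and `α(B)` is the ratio of the smallest nonzero eigenvalue to the largest eigenvalue. -/
theorem stmt4 {n : ℕ} (B : Matrix (Fin n) (Fin n) ℝ)
    (hB : B.PosSemidef) (hB0 : B ≠ 0) (α : ℝ)
    (hα : α = sInf {r : ℝ | r ≠ 0 ∧ ∃ i, hB.1.eigenvalues i = r} /
        sSup {r : ℝ | ∃ i, hB.1.eigenvalues i = r}) :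
    Real.sqrt α * Real.sqrt (B.rank) * (2 / (1 + α)) ≤
      B.trace / Real.sqrt (∑ i, ∑ j, (B i j) ^ 2) := by
  subst hα
  set f := hB.1.eigenvalues with hf
  have hfnn : ∀ i, 0 ≤ f i := hB.eigenvalues_nonneg
  set U : Matrix (Fin n) (Fin n) ℝ := (hB.1.eigenvectorUnitary : Matrix (Fin n) (Fin n) ℝ) with hU
  have hUst : (star U) * U = 1 := Unitary.coe_star_mul_self hB.1.eigenvectorUnitary
  have hspec := hB.1.spectral_theorem
  rw [Unitary.conjStarAlgAut_apply] at hspec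
  -- trace = sum of eigenvalues
  have htr : B.trace = ∑ i, f i := by
    conv_lhs => rw [hspec]
    rw [Matrix.trace_mul_comm, ← mul_assoc, hUst]
    simp [Matrix.trace_diagonal]
    rfl
  -- Frobenius norm squared = sum of squared eigenvalues
  have hsym : ∀ i j, B j i = B i j := by
    intro i j
    conv_lhs => rw [← hB.1]
    simp [Matrix.conjTranspose_apply]
  have hQ : ∑ i, ∑ j, (B i j) ^ 2 = ∑ i, (f i) ^ 2 := by
    have hBB : (B * B).trace = ∑ i, (f i) ^ 2 := by
      conv_lhs => rw [hspec]
      rw [show (U * Matrix.diagonal (RCLike.ofReal ∘ f) * star U) *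
            (U * Matrix.diagonal (RCLike.ofReal ∘ f) * star U)
          = U * (Matrix.diagonal (RCLike.ofReal ∘ f) * ((star U * U) *
            Matrix.diagonal (RCLike.ofReal ∘ f))) * star U by
        simp only [Matrix.mul_assoc]]
      rw [hUst, one_mul, Matrix.diagonal_mul_diagonal, Matrix.trace_mul_comm, ← Matrix.mul_assoc,
        hUst, one_mul]
      simp [Matrix.trace_diagonal, sq]
    rw [← hBB]
    simp only [Matrix.trace, Matrix.diag, Matrix.mul_apply]
    refine Finset.sum_congr rfl fun i _ => Finset.sum_congr rfl fun j _ => ?_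
    rw [hsym i j, sq]
  -- there is a nonzero eigenvalue
  have hex : ∃ i, f i ≠ 0 := by
    by_contra h
    push_neg at h
    apply hB0
    have hQ0 : ∑ i, ∑ j, (B i j) ^ 2 = 0 := by rw [hQ]; simp [h]
    ext i j
    have h1 : ∀ i ∈ Finset.univ, ∑ j, (B i j) ^ 2 = 0 :=
      (Finset.sum_eq_zero_iff_of_nonneg (fun i _ =>
        Finset.sum_nonneg fun j _ => sq_nonneg _)).mp hQ0
    have h2 := (Finset.sum_eq_zero_iff_of_nonneg (fun j _ => sq_nonneg (B i j))).mp
      (h1 i (Finset.mem_univ i)) j (Finset.mem_univ j)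
    have := pow_eq_zero_iff (n := 2) (by norm_num) |>.mp h2
    simpa using this
  obtain ⟨i₀, hi₀⟩ := hex
  -- the sSup (largest eigenvalue)
  have hrange : {r : ℝ | ∃ i, f i = r} = Set.range f := by ext r; simp [Set.range, eq_comm]
  set M := sSup {r : ℝ | ∃ i, f i = r} with hM
  have hrfin : (Set.range f).Finite := Set.finite_range f
  have hMmem : M ∈ Set.range f := by
    rw [hM, hrange]; exact Set.Nonempty.csSup_mem ⟨f i₀, ⟨i₀, rfl⟩⟩ hrfin
  have hleM : ∀ i, f i ≤ M := fun i => by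
    rw [hM, hrange]; exact le_csSup hrfin.bddAbove ⟨i, rfl⟩
  -- the sInf of nonzero eigenvalues
  set T := {r : ℝ | r ≠ 0 ∧ ∃ i, f i = r} with hT
  have hTsub : T ⊆ Set.range f := fun r hr => by obtain ⟨_, i, hi⟩ := hr; exact ⟨i, hi⟩
  have hTfin : T.Finite := hrfin.subset hTsub
  have hTne : T.Nonempty := ⟨f i₀, hi₀, i₀, rfl⟩
  set m := sInf T with hm
  have hmmem : m ∈ T := Set.Nonempty.csInf_mem hTne hTfin
  have hmle : ∀ i, f i ≠ 0 → m ≤ f i := fun i hi =>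
    csInf_le hTfin.bddBelow ⟨hi, i, rfl⟩
  have hmpos : 0 < m := by
    obtain ⟨hm0, i, hi⟩ := hmmem
    exact lt_of_le_of_ne (hi ▸ hfnn i) (Ne.symm (hi ▸ hm0))
  have hMpos : 0 < M := by
    obtain ⟨i, hi⟩ := hMmem
    exact lt_of_lt_of_le (lt_of_le_of_ne (hfnn i₀) (Ne.symm hi₀)) (hleM i₀)
  have hmM : m ≤ M := by obtain ⟨i, hi⟩ := hMmem; exact le_trans (hmle i₀ hi₀) (hleM i₀)
  -- rank as cardinality of nonzero eigenvalues
  set S := Finset.univ.filter (fun i => f i ≠ 0) with hS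
  have hrank : B.rank = S.card := by
    rw [hB.1.rank_eq_card_non_zero_eigs, Fintype.card_subtype]
  have hScard : 0 < S.card := Finset.card_pos.mpr ⟨i₀, by simp [hS, hi₀]⟩
  set r : ℝ := (S.card : ℝ) with hr
  have hrpos : 0 < r := by rw [hr]; exact_mod_cast hScard
  set s := ∑ i, f i with hs
  set Q := ∑ i, (f i) ^ 2 with hQdef
  have hQpos : 0 < Q := by
    apply Finset.sum_pos' (fun i _ => sq_nonneg _)
    exact ⟨i₀, Finset.mem_univ i₀, by positivity⟩
  -- key bound: Q + r*m*M ≤ (m+M)*s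
  have hkey : Q + r * m * M ≤ (m + M) * s := by
    have h1 : ∑ i ∈ S, ((f i) ^ 2 - (m + M) * f i + m * M) ≤ 0 := by
      apply Finset.sum_nonpos
      intro i hi
      have hi' : f i ≠ 0 := (Finset.mem_filter.mp hi).2
      have h1 := hmle i hi'
      have h2 := hleM i
      nlinarith
    have h2 : ∑ i ∈ S, (f i) ^ 2 = Q := by
      rw [hQdef]
      apply Finset.sum_subset (Finset.subset_univ S)
      intro i _ hi
      have : f i = 0 := by by_contra h; exact hi (Finset.mem_filter.mpr ⟨Finset.mem_univ i, h⟩)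
      simp [this]
    have h3 : ∑ i ∈ S, f i = s := by
      rw [hs]
      apply Finset.sum_subset (Finset.subset_univ S)
      intro i _ hi
      by_contra h
      exact hi (Finset.mem_filter.mpr ⟨Finset.mem_univ i, h⟩)
    have h4 : ∑ i ∈ S, ((f i) ^ 2 - (m + M) * f i + m * M)
        = Q - (m + M) * s + r * (m * M) := by
      rw [Finset.sum_add_distrib, Finset.sum_sub_distrib, h2, ← Finset.mul_sum, h3,
        Finset.sum_const, nsmul_eq_mul, hr]
    rw [h4] at h1
    linarith
  have hspos : 0 < s := by nlinarith [mul_pos (mul_pos hrpos hmpos) hMpos]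
  -- rewrite the goal
  rw [htr, hQ, hrank]
  rw [← hr]
  set β := m / M with hβ
  have hβpos : 0 < β := div_pos hmpos hMpos
  have hβle : β ≤ 1 := (div_le_one hMpos).mpr hmM
  have h1β : 0 < 1 + β := by linarith
  rw [le_div_iff₀ (Real.sqrt_pos.mpr hQpos)]
  have hL : 0 ≤ Real.sqrt β * Real.sqrt r * (2 / (1 + β)) * Real.sqrt Q :=
    mul_nonneg (mul_nonneg (mul_nonneg (Real.sqrt_nonneg _) (Real.sqrt_nonneg _))
      (div_nonneg zero_le_two h1β.le)) (Real.sqrt_nonneg _)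
  rw [← pow_le_pow_iff_left₀ hL hspos.le two_ne_zero]
  have hsq : (Real.sqrt β * Real.sqrt r * (2 / (1 + β)) * Real.sqrt Q) ^ 2
      = β * r * (2 / (1 + β)) ^ 2 * Q := by
    rw [mul_pow, mul_pow, mul_pow, Real.sq_sqrt hβpos.le, Real.sq_sqrt hrpos.le,
      Real.sq_sqrt hQpos.le]
  rw [hsq]
  have key : 4 * m * M * r * Q ≤ (m + M) ^ 2 * s ^ 2 := by
    have hmul : 4 * m * M * r * Q ≤ 4 * m * M * r * ((m + M) * s - r * m * M) := by
      apply mul_le_mul_of_nonneg_left (by linarith)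
        (mul_pos (mul_pos (mul_pos (by norm_num : (0:ℝ) < 4) hmpos) hMpos) hrpos).le
    nlinarith [sq_nonneg ((m + M) * s - 2 * r * m * M)]
  have hMne : M ≠ 0 := hMpos.ne'
  have h1βne : 1 + β ≠ 0 := h1β.ne'
  have heq : β * r * (2 / (1 + β)) ^ 2 * Q = 4 * m * M * r * Q / (m + M) ^ 2 := by
    rw [hβ]
    have : 1 + m / M = (m + M) / M := by field_simp; ring
    rw [this]
    have hmM' : m + M ≠ 0 := by positivity
    field_simp
    ring
  rw [heq, div_le_iff₀ (by positivity)]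
  linarith [key]
end
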